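/- Let A_L = √2 · Γ((L+1)/2)/Γ(L/2). Then for all integers L ≥ 1, √(2/π)·√L ≤ A_L ≤ √L. -/

import Mathlib

lemma gamma_half_le {x : ℝ} (hx : 0 < x) :
    Real.Gamma (x + 1/2) ≤ Real.sqrt x * Real.Gamma x := by
  have h1 : (0:ℝ) < x + 1 := by linarith
  have hc := Real.convexOn_log_Gamma.2 (Set.mem_Ioi.2 hx) (Set.mem_Ioi.2 h1)
    (by norm_num : (0:ℝ) ≤ (1/2:ℝ)) (by norm_num : (0:ℝ) ≤ (1/2:ℝ)) (by norm_num)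
  have heq : (1/2:ℝ) • x + (1/2:ℝ) • (x+1) = x + 1/2 := by ring_nf
  rw [heq] at hc
  simp only [Function.comp_apply, smul_eq_mul] at hc
  have hGx := Real.Gamma_pos_of_pos hx
  have hGx1 := Real.Gamma_pos_of_pos h1
  have hGxh := Real.Gamma_pos_of_pos (by linarith : (0:ℝ) < x + 1/2)
  have h2 : Real.Gamma (x+1/2)^2 ≤ Real.Gamma x * Real.Gamma (x+1) := by
    have := Real.exp_le_exp.2 hc
    rw [Real.exp_log hGxh] at this
    calc Real.Gamma (x+1/2)^2 ≤ Real.exp (1/2 * Real.log (Real.Gamma x) + 1/2 * Real.log (Real.Gamma (x+1)))^2 := by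
          nlinarith [hGxh.le, this]
      _ = Real.Gamma x * Real.Gamma (x+1) := by
          rw [← Real.exp_nat_mul]
          push_cast
          rw [show (2:ℝ) * (1/2 * Real.log (Real.Gamma x) + 1/2 * Real.log (Real.Gamma (x+1))) = Real.log (Real.Gamma x) + Real.log (Real.Gamma (x+1)) by ring,
            Real.exp_add, Real.exp_log hGx, Real.exp_log hGx1]
  rw [Real.Gamma_add_one hx.ne'] at h2
  have h3 : Real.Gamma (x+1/2)^2 ≤ (Real.sqrt x * Real.Gamma x)^2 := by
    rw [mul_pow, Real.sq_sqrt hx.le]; nlinarith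
  nlinarith [Real.sqrt_pos.2 hx, mul_pos (Real.sqrt_pos.2 hx) hGx]

/-- For `A_L = √2 Γ((L+1)/2)/Γ(L/2)` and all integers `L ≥ 1`,
`√(2/π) √L ≤ A_L ≤ √L`. -/
theorem stmt_9 (L : ℕ) (hL : 1 ≤ L) :
    Real.sqrt (2 / Real.pi) * Real.sqrt L ≤
      Real.sqrt 2 * Real.Gamma ((L + 1) / 2) / Real.Gamma (L / 2) ∧
    Real.sqrt 2 * Real.Gamma ((L + 1) / 2) / Real.Gamma (L / 2) ≤ Real.sqrt L := by
  have hπ : (3:ℝ) < Real.pi := Real.pi_gt_three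
  rcases eq_or_lt_of_le hL with h1 | h2
  · -- L = 1
    have : L = 1 := h1.symm
    subst this
    rw [Nat.cast_one, show ((1:ℝ)+1)/2 = 1 by norm_num, Real.Gamma_one,
      Real.Gamma_one_half_eq, Real.sqrt_one, mul_one, mul_one,
      Real.sqrt_div (by norm_num : (0:ℝ) ≤ 2)]
    constructor
    · exact le_refl _
    · rw [div_le_one (Real.sqrt_pos.2 Real.pi_pos)]
      exact Real.sqrt_le_sqrt (by linarith)
  · have hL2 : (2:ℕ) ≤ L := h2
    have hLr : (2:ℝ) ≤ (L:ℝ) := by exact_mod_cast hL2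
    set x : ℝ := (L:ℝ)/2 with hxdef
    have hx : 0 < x := by positivity
    have hx2 : 0 < x + 1/2 := by linarith
    have hrw : ((L:ℝ) + 1)/2 = x + 1/2 := by rw [hxdef]; ring
    rw [hrw]
    have hGx := Real.Gamma_pos_of_pos hx
    have hGxh := Real.Gamma_pos_of_pos hx2
    have hup := gamma_half_le hx
    have hlo := gamma_half_le hx2
    rw [show x + 1/2 + 1/2 = x + 1 by ring, Real.Gamma_add_one hx.ne'] at hlo
    constructor
    · -- lower bound
      have step1 : Real.sqrt 2 * (x / Real.sqrt (x + 1/2)) ≤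
          Real.sqrt 2 * Real.Gamma (x + 1/2) / Real.Gamma x := by
        rw [mul_div_assoc]
        refine mul_le_mul_of_nonneg_left ?_ (Real.sqrt_nonneg 2)
        rw [div_le_div_iff₀ (Real.sqrt_pos.2 hx2) hGx]
        calc x * Real.Gamma x ≤ Real.sqrt (x+1/2) * Real.Gamma (x+1/2) := hlo
          _ = Real.Gamma (x+1/2) * Real.sqrt (x+1/2) := mul_comm _ _
      refine le_trans ?_ step1
      have e1 : Real.sqrt (2/Real.pi) * Real.sqrt L = Real.sqrt (2 * L / Real.pi) := by
        rw [← Real.sqrt_mul (by positivity)]; ring_nf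
      have e2 : Real.sqrt 2 * (x / Real.sqrt (x+1/2)) = Real.sqrt (2 * x^2 / (x+1/2)) := by
        rw [Real.sqrt_div' _ (by positivity), Real.sqrt_mul (by norm_num),
          Real.sqrt_sq hx.le, mul_div_assoc]
      rw [e1, e2]
      refine Real.sqrt_le_sqrt ?_
      rw [div_le_div_iff₀ Real.pi_pos hx2]
      have : (0:ℝ) < L := by linarith
      nlinarith [hπ, hLr, sq_nonneg ((L:ℝ) - 2)]
    · -- upper bound
      have h4 : Real.sqrt 2 * Real.Gamma (x+1/2) / Real.Gamma x ≤
          Real.sqrt 2 * (Real.sqrt x * Real.Gamma x) / Real.Gamma x := by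
        gcongr
      refine h4.trans ?_
      rw [mul_div_assoc, mul_div_assoc, div_self hGx.ne', mul_one,
        ← Real.sqrt_mul (by norm_num)]
      rw [show 2 * x = (L:ℝ) by rw [hxdef]; ring]
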